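/- In ℂ[x,y], if p ≥ 0 and q > 0 are coprime integers and λ1/λ2 = -p/q, then every first integral of λ1·x ∂/∂x + λ2·y ∂/∂y is a polynomial function of x^q y^p. -/

import Mathlib

open MvPolynomial

/-- Auxiliary: the coefficient of `X i * ∂f/∂X i` at a monomial `m` is `m i` times
the corresponding coefficient of `f`. -/
lemma coeff_X_mul_pderiv (i : Fin 2) (f : MvPolynomial (Fin 2) ℂ) (m : Fin 2 →₀ ℕ) :
    coeff m (X i * pderiv i f) = (m i : ℂ) * coeff m f := by
  induction f using MvPolynomial.induction_on' with
  | monomial s a =>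
    rw [pderiv_monomial, ← pow_one (X i : MvPolynomial (Fin 2) ℂ), ← monomial_single_add,
      coeff_monomial, coeff_monomial]
    by_cases hs : s i = 0
    · simp only [hs, Nat.cast_zero, mul_zero, ite_self]
      split_ifs with h
      · subst h; simp [hs]
      · ring
    · have hsi : Finsupp.single i 1 + (s - Finsupp.single i 1) = s := by
        ext j
        by_cases hj : j = i
        · subst hj; simp; omega
        · simp [Finsupp.single_apply, hj, Ne.symm hj]
      rw [hsi]
      split_ifs with h
      · subst h; ring
      · ring
  | add f g hf hg =>
    simp [map_add, mul_add, coeff_add, hf, hg, mul_add]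

/-- In ℂ[x,y], if p ≥ 0 and q > 0 are coprime and λ₁/λ₂ = -p/q (λ₂ ≠ 0), then
every element of the kernel of λ₁·x ∂/∂x + λ₂·y ∂/∂y — in particular every
first integral — is a polynomial in x^q y^p. -/
theorem first_integrals_are_polynomials_in_monomial
    (p q : ℕ) (hq : 0 < q) (hpq : Nat.Coprime p q)
    (l1 l2 : ℂ) (hl2 : l2 ≠ 0) (hslope : (q : ℂ) * l1 + (p : ℂ) * l2 = 0)
    (f : MvPolynomial (Fin 2) ℂ)
    (hf : l1 • (X 0 * pderiv 0 f) + l2 • (X 1 * pderiv 1 f) = 0) :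
    ∃ g : Polynomial ℂ, f = Polynomial.aeval ((X 0) ^ q * (X 1) ^ p) g := by
  set z : MvPolynomial (Fin 2) ℂ := X 0 ^ q * X 1 ^ p with hz
  suffices h : f ∈ (Polynomial.aeval z : Polynomial ℂ →ₐ[ℂ] MvPolynomial (Fin 2) ℂ).range by
    obtain ⟨g, hg⟩ := h
    exact ⟨g, hg.symm⟩
  rw [f.as_sum]
  apply Subalgebra.sum_mem
  intro m hm
  have hc : coeff m f ≠ 0 := mem_support_iff.mp hm
  have h0 : l1 * ((m 0 : ℂ) * coeff m f) + l2 * ((m 1 : ℂ) * coeff m f) = 0 := by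
    have := congrArg (coeff m) hf
    simpa [coeff_add, coeff_smul, coeff_X_mul_pderiv, smul_eq_mul] using this
  have h1 : l1 * (m 0 : ℂ) + l2 * (m 1 : ℂ) = 0 := by
    have h0' : (l1 * (m 0 : ℂ) + l2 * (m 1 : ℂ)) * coeff m f = 0 := by linear_combination h0
    exact (mul_eq_zero.mp h0').resolve_right hc
  have h2 : ((q : ℂ) * (m 1) - (p : ℂ) * (m 0)) = 0 := by
    have hll : l2 * ((q : ℂ) * (m 1) - (p : ℂ) * (m 0)) = 0 := by
      linear_combination (q : ℂ) * h1 - (m 0 : ℂ) * hslope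
    exact (mul_eq_zero.mp hll).resolve_left hl2
  have h3 : q * m 1 = p * m 0 := by
    have : (q : ℂ) * (m 1) = (p : ℂ) * (m 0) := by linear_combination h2
    exact_mod_cast this
  have hdvd : q ∣ m 0 := (Nat.Coprime.dvd_of_dvd_mul_left hpq.symm ⟨m 1, h3.symm⟩)
  obtain ⟨k, hk⟩ := hdvd
  have hm1 : m 1 = p * k := by
    apply Nat.eq_of_mul_eq_mul_left hq
    rw [h3, hk]; ring
  have hmeq : m = Finsupp.single 0 (q * k) + Finsupp.single 1 (p * k) := by
    ext j
    fin_cases j <;> simp [Finsupp.single_apply, ← hk, ← hm1]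
  refine ⟨Polynomial.C (coeff m f) * Polynomial.X ^ k, ?_⟩
  rw [hmeq, monomial_add_single, ← C_mul_X_pow_eq_monomial]
  simp only [AlgHom.toRingHom_eq_coe, RingHom.coe_coe, map_mul, map_pow,
    Polynomial.aeval_C, Polynomial.aeval_X, algebraMap_eq, hz, mul_pow, ← pow_mul]
  ring
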